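/- For all natural numbers n, m, k: S_q[n+m, k] = Σ_{r=0}^{n} Σ_{j=0}^{m} S_q[m,j] · q^{j(k−j)} · binom(r, k−j)_{1/q} · S_q[n,r] · Π_{i=0}^{r−k+j−1} [j−i]_q, where the product is [j]_q [j−1]_q ⋯ [k−r+1]_q (empty, hence 1, when r − k + j ≤ 0), binom(r, k−j) is interpreted as 0 when j > k, and the exponent k − j is computed in ℤ. -/

import Mathlib

/-- The `q`-bracket `[t]_q = (q^t - 1)/(q - 1)` (real exponentiation). -/
noncomputable def qBracket (q t : ℝ) : ℝ := (q ^ t - 1) / (q - 1)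

open Classical in
/-- The `Q`-binomial coefficient: the sum of `Q^(t₁+⋯+t_{n-k})` over all weakly
increasing integer tuples `0 ≤ t₁ ≤ ⋯ ≤ t_{n-k} ≤ k` when `k ≤ n`, and `0` when `k > n`. -/
noncomputable def qBinom (Q : ℝ) (n k : ℕ) : ℝ :=
  if k ≤ n then
    ∑ f ∈ Finset.univ.filter (fun f : Fin (n - k) → Fin (k + 1) => Monotone f),
      Q ^ (∑ i, (f i : ℕ))
  else 0

/-- The `q`-Stirling numbers of the second kind `S_q[n,k]`. -/
noncomputable def qStirling (q : ℝ) : ℕ → ℕ → ℝ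
  | 0, 0 => 1
  | 0, _ + 1 => 0
  | _ + 1, 0 => 0
  | n + 1, k + 1 =>
    if k + 1 ≤ n + 1 then
      q ^ k * qStirling q n k + qBracket q ((k : ℝ) + 1) * qStirling q n (k + 1)
    else 0

noncomputable def qb (Q : ℝ) (i : ℕ) : ℝ := (Q ^ i - 1) / (Q - 1)

noncomputable def qfact (Q : ℝ) (n : ℕ) : ℝ := ∏ i ∈ Finset.range n, qb Q (i + 1)

lemma qBinom_of_lt (Q : ℝ) {n k : ℕ} (h : n < k) : qBinom Q n k = 0 := by
  simp [qBinom, Nat.not_le.mpr h]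

lemma qBinom_zero_right (Q : ℝ) (n : ℕ) : qBinom Q n 0 = 1 := by
  rw [qBinom, if_pos (Nat.zero_le n)]
  have h2 : (Finset.univ.filter (fun f : Fin (n - 0) → Fin (0 + 1) => Monotone f)) =
      Finset.univ := by
    ext f
    simp only [Finset.mem_filter, Finset.mem_univ, true_and, iff_true]
    intro a b _
    simp [Fin.le_def, Fin.fin_one_eq_zero, (Fin.fin_one_eq_zero (f a)), (Fin.fin_one_eq_zero (f b))]
  rw [h2]
  have h1 : ∀ f : Fin (n - 0) → Fin (0 + 1), (∑ i, ((f i : ℕ))) = 0 := by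
    intro f
    simp [Fin.fin_one_eq_zero]
  rw [Finset.sum_congr rfl (fun f _ => by rw [h1 f])]
  have : (Finset.univ : Finset (Fin (n - 0) → Fin (0 + 1))).card = 1 := by
    simp [Finset.card_univ]
  simp [this]

lemma qBinom_self (Q : ℝ) (n : ℕ) : qBinom Q n n = 1 := by
  rw [qBinom, if_pos le_rfl]
  have h2 : (Finset.univ.filter (fun f : Fin (n - n) → Fin (n + 1) => Monotone f)) =
      Finset.univ := by
    ext f
    simp only [Finset.mem_filter, Finset.mem_univ, true_and, iff_true]
    intro a
    exact absurd a.2 (by simp)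
  rw [h2]
  have h1 : ∀ f : Fin (n - n) → Fin (n + 1), (∑ i, ((f i : ℕ))) = 0 := by
    intro f
    apply Finset.sum_eq_zero
    intro i _
    exact absurd i.2 (by simp)
  rw [Finset.sum_congr rfl (fun f _ => by rw [h1 f])]
  have : (Finset.univ : Finset (Fin (n - n) → Fin (n + 1))).card = 1 := by
    simp [Finset.card_univ]
  simp [this]


open Classical Finset in
lemma sum_mono_split (Q : ℝ) (e k : ℕ) :
    ∑ f ∈ Finset.univ.filter (fun f : Fin (e+1) → Fin (k+1+1) => Monotone f),
        Q ^ (∑ i, (f i : ℕ))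
    = (∑ f ∈ Finset.univ.filter (fun f : Fin (e+1) → Fin (k+1) => Monotone f),
        Q ^ (∑ i, (f i : ℕ)))
    + Q^(k+1) * ∑ f ∈ Finset.univ.filter (fun f : Fin e → Fin (k+1+1) => Monotone f),
        Q ^ (∑ i, (f i : ℕ)) := by
  classical
  have h1 : ∑ f ∈ (Finset.univ.filter (fun f : Fin (e+1) → Fin (k+1+1) => Monotone f)).filter
        (fun f => f (Fin.last e) = Fin.last (k+1)), Q ^ (∑ i, (f i : ℕ))
      = Q^(k+1) * ∑ f ∈ Finset.univ.filter (fun f : Fin e → Fin (k+1+1) => Monotone f),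
        Q ^ (∑ i, (f i : ℕ)) := by
    rw [Finset.mul_sum]
    apply Finset.sum_nbij' (i := fun f : Fin (e+1) → Fin (k+1+1) => Fin.init f)
      (j := fun g : Fin e → Fin (k+1+1) => Fin.snoc g (Fin.last (k+1)))
    · intro f hf
      simp only [Finset.mem_filter, Finset.mem_univ, true_and] at hf ⊢
      exact hf.1.comp Fin.strictMono_castSucc.monotone
    · intro g hg
      simp only [Finset.mem_filter, Finset.mem_univ, true_and] at hg ⊢
      constructor
      · intro a b hab
        rcases Fin.eq_castSucc_or_eq_last a with ⟨a', rfl⟩ | rfl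
        · rcases Fin.eq_castSucc_or_eq_last b with ⟨b', rfl⟩ | rfl
          · simpa [Fin.snoc_castSucc] using hg ((Fin.castSucc_le_castSucc_iff).mp hab)
          · simp [Fin.snoc_castSucc, Fin.snoc_last, Fin.le_last]
        · have : b = Fin.last e := le_antisymm (Fin.le_last b) hab
          subst this; exact le_rfl
      · simp [Fin.snoc_last]
    · intro f hf
      simp only [Finset.mem_filter, Finset.mem_univ, true_and] at hf
      rw [← hf.2]
      exact Fin.snoc_init_self f
    · intro g hg
      simp [Fin.init_snoc]
    · intro f hf
      simp only [Finset.mem_filter, Finset.mem_univ, true_and] at hf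
      rw [Fin.sum_univ_castSucc (fun i => ((f i : ℕ)))]
      rw [hf.2]
      rw [pow_add]
      simp [Fin.init, Fin.val_last]
      ring
  have h2 : ∑ f ∈ (Finset.univ.filter (fun f : Fin (e+1) → Fin (k+1+1) => Monotone f)).filter
        (fun f => ¬ (f (Fin.last e) = Fin.last (k+1))), Q ^ (∑ i, (f i : ℕ))
      = ∑ f ∈ Finset.univ.filter (fun f : Fin (e+1) → Fin (k+1) => Monotone f),
        Q ^ (∑ i, (f i : ℕ)) := by
    apply Finset.sum_nbij'
      (i := fun f : Fin (e+1) → Fin (k+1+1) => fun x =>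
        (⟨min (f x : ℕ) k, lt_of_le_of_lt (min_le_right _ _) (Nat.lt_succ_self k)⟩ : Fin (k+1)))
      (j := fun g : Fin (e+1) → Fin (k+1) => fun x => (g x).castSucc)
    · intro f hf
      simp only [Finset.mem_filter, Finset.mem_univ, true_and] at hf ⊢
      intro a b hab
      simp only [Fin.mk_le_mk]
      exact min_le_min (hf.1 hab) le_rfl
    · intro g hg
      simp only [Finset.mem_filter, Finset.mem_univ, true_and] at hg ⊢
      refine ⟨fun a b hab => ?_, ?_⟩
      · simpa [Fin.castSucc_le_castSucc_iff] using hg hab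
      · intro h
        have := congrArg Fin.val h
        simp at this
        omega
    · intro f hf
      simp only [Finset.mem_filter, Finset.mem_univ, true_and] at hf
      have hb : ∀ x, (f x : ℕ) ≤ k := by
        intro x
        have h1 : f x ≤ f (Fin.last e) := hf.1 (Fin.le_last x)
        have h2 : (f (Fin.last e) : ℕ) < k + 1 := by
          have := (f (Fin.last e)).isLt
          rcases Nat.lt_or_ge ((f (Fin.last e) : ℕ)) (k+1) with h | h
          · exact h
          · exfalso; apply hf.2; apply Fin.ext; simp; omega
        have := h1
        rw [Fin.le_def] at this
        omega
      funext x
      apply Fin.ext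
      simp [min_eq_left (hb x)]
    · intro g hg
      funext x
      apply Fin.ext
      simp [min_eq_left (Nat.lt_succ_iff.mp (g x).isLt)]
    · intro f hf
      simp only [Finset.mem_filter, Finset.mem_univ, true_and] at hf
      have hb : ∀ x, (f x : ℕ) ≤ k := by
        intro x
        have h1 : f x ≤ f (Fin.last e) := hf.1 (Fin.le_last x)
        have h2 : (f (Fin.last e) : ℕ) < k + 1 := by
          rcases Nat.lt_or_ge ((f (Fin.last e) : ℕ)) (k+1) with h | h
          · exact h
          · exfalso; apply hf.2; apply Fin.ext; simp
            have := (f (Fin.last e)).isLt; omega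
        rw [Fin.le_def] at h1
        omega
      congr 1
      apply Finset.sum_congr rfl
      intro x _
      simp [min_eq_left (hb x)]
  rw [← Finset.sum_filter_add_sum_filter_not
    (Finset.univ.filter (fun f : Fin (e+1) → Fin (k+1+1) => Monotone f))
    (fun f => f (Fin.last e) = Fin.last (k+1)), h1, h2]
  ring

lemma qBinom_pascal (Q : ℝ) (n k : ℕ) :
    qBinom Q (n+1) (k+1) = qBinom Q n k + Q^(k+1) * qBinom Q n (k+1) := by
  rcases Nat.lt_or_ge n k with h | h
  · rw [qBinom, qBinom, qBinom, if_neg (by omega), if_neg (by omega), if_neg (by omega)]; ring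
  rcases Nat.eq_or_lt_of_le h with rfl | hlt
  · rw [qBinom_self, qBinom_self, qBinom_of_lt Q (Nat.lt_succ_self k)]; ring
  · obtain ⟨e, he⟩ : ∃ e, n - (k+1) = e := ⟨_, rfl⟩
    have h1 : n + 1 - (k + 1) = e + 1 := by omega
    have h2 : n - k = e + 1 := by omega
    rw [qBinom, qBinom, qBinom, if_pos (by omega), if_pos (by omega), if_pos (by omega),
      h1, h2, he]
    exact sum_mono_split Q e k
lemma qfact_succ (Q : ℝ) (m : ℕ) : qfact Q (m+1) = qfact Q m * qb Q (m+1) :=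
  Finset.prod_range_succ _ _

lemma qfact_zero (Q : ℝ) : qfact Q 0 = 1 := Finset.prod_range_zero _

lemma qb_add (Q : ℝ) (a b : ℕ) : qb Q a + Q^a * qb Q b = qb Q (a+b) := by
  unfold qb
  rw [show Q^a * ((Q^b - 1)/(Q-1)) = (Q^a*(Q^b-1))/(Q-1) from (mul_div_assoc _ _ _).symm,
    ← add_div]
  congr 1
  rw [pow_add]; ring

lemma qBinom_fact (Q : ℝ) : ∀ (n : ℕ) {k : ℕ}, k ≤ n →
    qBinom Q n k * (qfact Q k * qfact Q (n - k)) = qfact Q n := by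
  intro n
  induction n with
  | zero =>
    intro k hk
    interval_cases k
    simp [qBinom_zero_right, qfact_zero]
  | succ n ih =>
    intro k hk
    cases k with
    | zero => simp [qBinom_zero_right, qfact_zero]
    | succ k =>
      have hk' : k ≤ n := by omega
      rw [qBinom_pascal]
      rcases Nat.eq_or_lt_of_le hk' with rfl | hlt
      · rw [qBinom_self, qBinom_of_lt Q (Nat.lt_succ_self k)]
        simp [qfact_zero]
      · obtain ⟨u, hu⟩ : ∃ u, n - (k+1) = u := ⟨_, rfl⟩
        have e1 := ih hk'
        have e2 := ih (show k + 1 ≤ n by omega)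
        rw [show n - k = u + 1 by omega, qfact_succ] at e1
        rw [hu] at e2
        rw [qfact_succ] at e2
        rw [show n + 1 - (k + 1) = u + 1 by omega, qfact_succ, qfact_succ,
          show qfact Q (n+1) = qfact Q n * qb Q ((k+1) + (u+1)) by
            rw [qfact_succ]; congr 2; omega]
        linear_combination qb Q (k+1) * e1 + Q^(k+1) * qb Q (u+1) * e2
          + qfact Q n * qb_add Q (k+1) (u+1)

lemma qb_ne_zero {Q : ℝ} (hQ : 0 < Q) (hQ1 : Q ≠ 1) {i : ℕ} (hi : 1 ≤ i) : qb Q i ≠ 0 := by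
  unfold qb
  have h1 : Q - 1 ≠ 0 := sub_ne_zero.mpr hQ1
  have h2 : Q ^ i ≠ 1 := by
    rcases lt_or_gt_of_ne hQ1 with h | h
    · exact ne_of_lt (pow_lt_one₀ (le_of_lt hQ) h (by omega))
    · exact ne_of_gt (one_lt_pow₀ h (by omega))
  exact div_ne_zero (sub_ne_zero.mpr h2) h1

lemma qfact_ne_zero {Q : ℝ} (hQ : 0 < Q) (hQ1 : Q ≠ 1) (n : ℕ) : qfact Q n ≠ 0 := by
  unfold qfact
  exact Finset.prod_ne_zero_iff.mpr (fun i _ => qb_ne_zero hQ hQ1 (by omega))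

lemma qBinom_absorb {Q : ℝ} (hQ : 0 < Q) (hQ1 : Q ≠ 1) {s r : ℕ} (hs : 1 ≤ s) (hsr : s ≤ r) :
    qb Q s * qBinom Q r s = qb Q (r - s + 1) * qBinom Q r (s - 1) := by
  obtain ⟨t, rfl⟩ : ∃ t, t + 1 = s := ⟨s - 1, by omega⟩
  have e1 := qBinom_fact Q r (show t + 1 ≤ r from hsr)
  have e2 := qBinom_fact Q r (show t ≤ r by omega)
  rw [show r - (t+1) = (r - (t+1)) by rfl] at e1
  obtain ⟨u, hu⟩ : ∃ u, r - (t+1) = u := ⟨_, rfl⟩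
  rw [hu] at e1
  rw [show r - t = u + 1 by omega] at e2
  rw [show t + 1 - 1 = t by omega, show r - (t+1) + 1 = u + 1 by omega]
  rw [qfact_succ] at e1 e2
  -- e1 : B(r,t+1) * ((qfact t * qb (t+1)) * qfact u) = qfact r
  -- e2 : B(r,t) * (qfact t * (qfact u * qb (u+1))) = qfact r
  have h1 := qfact_ne_zero hQ hQ1 t
  have h2 := qfact_ne_zero hQ hQ1 u
  have key : qb Q (t+1) * qBinom Q r (t+1) * (qfact Q t * qfact Q u)
      = qb Q (u+1) * qBinom Q r t * (qfact Q t * qfact Q u) := by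
    linear_combination e1 - e2
  have := mul_right_cancel₀ (mul_ne_zero h1 h2) key
  exact this

lemma qStirling_of_lt (q : ℝ) : ∀ {n k : ℕ}, n < k → qStirling q n k = 0 := by
  intro n
  induction n with
  | zero =>
    intro k hk
    match k, hk with
    | k + 1, _ => rfl
  | succ n ih =>
    intro k hk
    match k, hk with
    | k + 1, hk => rw [qStirling, if_neg (by omega)]

lemma qStirling_succ_succ (q : ℝ) (n k : ℕ) :
    qStirling q (n+1) (k+1)
      = q ^ k * qStirling q n k + qBracket q ((k : ℝ) + 1) * qStirling q n (k + 1) := by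
  by_cases h : k + 1 ≤ n + 1
  · rw [qStirling, if_pos h]
  · rw [qStirling, if_neg h, qStirling_of_lt q (show n < k by omega),
      qStirling_of_lt q (show n < k + 1 by omega)]
    ring

lemma qBracket_natCast (q : ℝ) (i : ℕ) : qBracket q ((i : ℝ)) = qb q i := by
  unfold qBracket qb
  rw [Real.rpow_natCast]
noncomputable def Tm (q : ℝ) (n r j k : ℕ) : ℝ :=
  q ^ ((j : ℝ) * ((k : ℝ) - (j : ℝ))) *
    (if j ≤ k then qBinom (1 / q) r (k - j) else 0) *
    qStirling q n r *
    ∏ i ∈ Finset.range (r + j - k), qBracket q ((j : ℝ) - (i : ℝ))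

lemma rpow_nat_mul_sub (q : ℝ) (hq : 0 < q) {j k : ℕ} (h : j ≤ k) :
    q ^ ((j : ℝ) * ((k : ℝ) - (j : ℝ))) = q ^ (j * (k - j)) := by
  rw [show (j : ℝ) * ((k : ℝ) - (j : ℝ)) = ((j * (k - j) : ℕ) : ℝ) by
    push_cast [Nat.cast_sub h]; ring]
  exact Real.rpow_natCast q _

lemma key_lemma {q : ℝ} (hq : 0 < q) (hq1 : q ≠ 1) (n r j K : ℕ) :
    q ^ j * Tm q n r (j+1) (K+1) + qb q j * Tm q n r j (K+1)
      = q ^ K * Tm q n r j K + qb q (K+1) * Tm q n r j (K+1) := by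
  rcases Nat.lt_or_ge K j with hKj | hjK
  · -- j ≥ K + 1
    rcases Nat.eq_or_lt_of_le hKj with hje | hlt
    · -- j = K + 1
      have e1 : Tm q n r (j+1) (K+1) = 0 := by
        rw [Tm, if_neg (by omega)]; ring
      have e2 : Tm q n r j K = 0 := by
        rw [Tm, if_neg (by omega)]; ring
      rw [e1, e2, ← hje]
      ring
    · -- j ≥ K + 2
      have e1 : Tm q n r (j+1) (K+1) = 0 := by rw [Tm, if_neg (by omega)]; ring
      have e2 : Tm q n r j K = 0 := by rw [Tm, if_neg (by omega)]; ring
      have e3 : Tm q n r j (K+1) = 0 := by rw [Tm, if_neg (by omega)]; ring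
      rw [e1, e2, e3]; ring
  · -- j ≤ K
    obtain ⟨s, rfl⟩ : ∃ s, K = j + s := ⟨K - j, by omega⟩
    rcases Nat.lt_or_ge r (s+1) with hrs | hrs
    · -- r ≤ s : empty products, qBinom r (s+1) = 0
      have h1 : r + (j+1) - (j+s+1) = 0 := by omega
      have h2 : r + j - (j+s+1) = 0 := by omega
      have h3 : r + j - (j+s) = 0 := by omega
      have hb1 : qBinom (1/q) r ((j+s+1) - j) = 0 := by
        rw [show (j+s+1) - j = s+1 from by omega]; exact qBinom_of_lt _ (by omega)
      rw [Tm, Tm, Tm, if_pos (by omega), if_pos (by omega), if_pos (by omega), h1, h2, h3, hb1]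
      simp only [Finset.range_zero, Finset.prod_empty]
      rw [rpow_nat_mul_sub q hq (by omega), rpow_nat_mul_sub q hq (by omega),
        rpow_nat_mul_sub q hq (by omega)]
      rw [show (j+s+1)-(j+1) = s from by omega, show (j+s+1)-j = s+1 from by omega,
        show (j+s)-j = s from by omega]
      have hp : q^(j:ℕ) * q^((j+1)*s) = q^(j+s) * q^(j*s) := by
        rw [← pow_add, ← pow_add]; congr 1; ring
      linear_combination (qBinom (1/q) r s * qStirling q n r) * hp
    · -- r ≥ s + 1
      obtain ⟨t, rfl⟩ : ∃ t, r = s + t + 1 := ⟨r - s - 1, by omega⟩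
      rw [Tm, Tm, Tm, if_pos (by omega), if_pos (by omega), if_pos (by omega)]
      rw [rpow_nat_mul_sub q hq (by omega), rpow_nat_mul_sub q hq (by omega),
        rpow_nat_mul_sub q hq (by omega)]
      rw [show (j+s+1)-(j+1) = s from by omega, show (j+s+1)-j = s+1 from by omega,
        show (j+s)-j = s from by omega,
        show (s+t+1) + (j+1) - (j+s+1) = t+1 from by omega,
        show (s+t+1) + j - (j+s+1) = t from by omega,
        show (s+t+1) + j - (j+s) = t+1 from by omega]
      have hP1 : ∏ i ∈ Finset.range (t+1), qBracket q (((j+1 : ℕ) : ℝ) - (i : ℝ))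
          = qb q (j+1) * ∏ i ∈ Finset.range t, qBracket q ((j : ℝ) - (i : ℝ)) := by
        rw [Finset.prod_range_succ']
        rw [show (((j+1:ℕ)):ℝ) - ((0:ℕ):ℝ) = ((j+1 : ℕ) : ℝ) by push_cast; ring]
        rw [qBracket_natCast, mul_comm]
        congr 1
        apply Finset.prod_congr rfl
        intro i _
        congr 1
        push_cast; ring
      have hP3 : ∏ i ∈ Finset.range (t+1), qBracket q ((j : ℝ) - (i : ℝ))
          = (∏ i ∈ Finset.range t, qBracket q ((j : ℝ) - (i : ℝ)))
            * qBracket q ((j:ℝ) - (t:ℝ)) := Finset.prod_range_succ _ _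
      rw [hP1, hP3]
      have hq0 : q ≠ 0 := ne_of_gt hq
      have h01 : (0:ℝ) < 1/q := by positivity
      have h11 : (1:ℝ)/q ≠ 1 := by
        intro h
        apply hq1
        field_simp at h
        exact h.symm
      have habs := qBinom_absorb h01 h11 (show 1 ≤ s+1 by omega)
        (show s+1 ≤ s+t+1 by omega)
      rw [show (s+t+1) - (s+1) + 1 = t+1 from by omega, show s+1-1 = s from by omega] at habs
      have hq1' : q - 1 ≠ 0 := sub_ne_zero.mpr hq1
      have h1q : (1:ℝ) - q ≠ 0 := by intro h; apply hq1; linarith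
      have habs2 : q^t * (q^(s+1) - 1) * qBinom (1/q) (s+t+1) (s+1)
          = q^s * (q^(t+1) - 1) * qBinom (1/q) (s+t+1) s := by
        unfold qb at habs
        field_simp at habs
        apply mul_left_cancel₀ (show (q^2*(1-q) : ℝ) ≠ 0 from
          mul_ne_zero (pow_ne_zero _ hq0) h1q)
        have hi1 : q^(s+1) * (1/q)^(s+1) = 1 := by rw [← mul_pow, mul_one_div_cancel hq0, one_pow]
        have hi2 : q^(t+1) * (1/q)^(t+1) = 1 := by rw [← mul_pow, mul_one_div_cancel hq0, one_pow]
        linear_combination (q^2*(1-q)) * (-(q^t*q^(s+1)) * habs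
          + q^t * qBinom (1/q) (s+t+1) (s+1) * hi1 - q^s * qBinom (1/q) (s+t+1) s * hi2)
      have hbr : qBracket q ((j:ℝ) - (t:ℝ)) = (q^j - q^t) / (q^t * (q - 1)) := by
        unfold qBracket
        rw [Real.rpow_sub hq, Real.rpow_natCast, Real.rpow_natCast]
        rw [div_sub_one (by positivity), div_div]
      have h1 : (q-1) * qb q (j+1) = q^(j+1) - 1 := by unfold qb; field_simp
      have h2 : (q-1) * qb q j = q^j - 1 := by unfold qb; field_simp
      have h4 : (q-1) * qb q (j+s+1) = q^(j+s+1) - 1 := by unfold qb; field_simp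
      have h3 : q^t * (q-1) * qBracket q ((j:ℝ)-(t:ℝ)) = q^j - q^t := by
        rw [hbr]; field_simp
      set P := ∏ i ∈ Finset.range t, qBracket q ((j : ℝ) - (i : ℝ)) with hP
      set S := qStirling q n (s+t+1) with hS
      set B0 := qBinom (1/q) (s+t+1) s with hB0
      set B1 := qBinom (1/q) (s+t+1) (s+1) with hB1
      apply mul_left_cancel₀ (show ((q-1)*q^t : ℝ) ≠ 0 from
        mul_ne_zero hq1' (pow_ne_zero _ hq0))
      linear_combination (q^t * q^j * q^((j+1)*s) * B0 * S * P) * h1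
        + (q^t * q^(j*(s+1)) * B1 * S * P) * h2
        - (q^(j+s) * q^(j*s) * B0 * S * P) * h3
        - (q^t * q^(j*(s+1)) * B1 * S * P) * h4
        - (q^(j*s+2*j) * S * P) * habs2
theorem conv' (q : ℝ) (hq : 0 < q) (hq1 : q ≠ 1) (n : ℕ) :
    ∀ (m k : ℕ), qStirling q (n + m) k
      = ∑ r ∈ Finset.range (n + 1), ∑ j ∈ Finset.range (m + 1),
          qStirling q m j * Tm q n r j k := by
  intro m
  induction m with
  | zero =>
    intro k
    have hterm : ∀ r, ∑ j ∈ Finset.range (0 + 1), qStirling q 0 j * Tm q n r j k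
        = Tm q n r 0 k := by
      intro r
      rw [Nat.zero_add, Finset.sum_range_one, show qStirling q 0 0 = (1:ℝ) from rfl, one_mul]
    rw [Nat.add_zero, Finset.sum_congr rfl (fun r _ => hterm r)]
    by_cases hk : k ≤ n
    · rw [Finset.sum_eq_single_of_mem k (Finset.mem_range.mpr (by omega))]
      · simp only [Tm, if_pos (Nat.zero_le k), show k - 0 = k from rfl, qBinom_self,
          show k + 0 - k = 0 by omega]
        simp only [Nat.cast_zero, zero_mul, Real.rpow_zero, Finset.range_zero,
          Finset.prod_empty]
        ring
      · intro r hr hrk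
        simp only [Tm, if_pos (Nat.zero_le k), show k - 0 = k from rfl]
        rcases Nat.lt_or_ge r k with h | h
        · rw [qBinom_of_lt _ h]; ring
        · have hmem : (0:ℕ) ∈ Finset.range (r + 0 - k) := Finset.mem_range.mpr (by omega)
          rw [Finset.prod_eq_zero hmem (by
            rw [show ((0:ℕ):ℝ) - ((0:ℕ):ℝ) = (0:ℝ) by norm_num]
            unfold qBracket
            rw [Real.rpow_zero]
            norm_num)]
          ring
    · rw [qStirling_of_lt q (by omega)]
      symm
      apply Finset.sum_eq_zero
      intro r hr
      simp only [Tm, if_pos (Nat.zero_le k), show k - 0 = k from rfl]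
      rw [qBinom_of_lt _ (by simp only [Finset.mem_range] at hr; omega)]
      ring
  | succ m ih =>
    intro k
    cases k with
    | zero =>
      rw [show n + (m+1) = (n+m)+1 by omega, show qStirling q ((n+m)+1) 0 = 0 from rfl]
      symm
      apply Finset.sum_eq_zero
      intro r _
      apply Finset.sum_eq_zero
      intro j hj
      cases j with
      | zero => rw [show qStirling q (m+1) 0 = 0 from rfl]; ring
      | succ j =>
        rw [show Tm q n r (j+1) 0 = 0 by rw [Tm, if_neg (by omega)]; ring]
        ring
    | succ K =>
      have hL : qStirling q (n + (m+1)) (K+1)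
          = q^K * qStirling q (n+m) K + qb q (K+1) * qStirling q (n+m) (K+1) := by
        rw [show n + (m+1) = (n+m)+1 by omega, qStirling_succ_succ,
          show ((K:ℝ)+1) = (((K+1:ℕ)):ℝ) by push_cast; ring, qBracket_natCast]
      have hR : ∀ r, (∑ j ∈ Finset.range (m+1+1), qStirling q (m+1) j * Tm q n r j (K+1))
          = ∑ j ∈ Finset.range (m+1), (q^K * (qStirling q m j * Tm q n r j K)
              + qb q (K+1) * (qStirling q m j * Tm q n r j (K+1))) := by
        intro r
        have hsplit : ∀ j, qStirling q (m+1) (j+1) * Tm q n r (j+1) (K+1)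
            = q^j * qStirling q m j * Tm q n r (j+1) (K+1)
              + qb q (j+1) * (qStirling q m (j+1) * Tm q n r (j+1) (K+1)) := by
          intro j
          rw [qStirling_succ_succ, show ((j:ℝ)+1) = (((j+1:ℕ)):ℝ) by push_cast; ring,
            qBracket_natCast]
          ring
        have hshift : ∑ j ∈ Finset.range (m+1),
              qb q (j+1) * (qStirling q m (j+1) * Tm q n r (j+1) (K+1))
            = ∑ j ∈ Finset.range (m+1), qb q j * (qStirling q m j * Tm q n r j (K+1)) := by
          have e1 : (∑ j ∈ Finset.range (m+1),
                qb q (j+1) * (qStirling q m (j+1) * Tm q n r (j+1) (K+1)))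
                + qb q 0 * (qStirling q m 0 * Tm q n r 0 (K+1))
              = (∑ j ∈ Finset.range (m+1), qb q j * (qStirling q m j * Tm q n r j (K+1)))
                + qb q (m+1) * (qStirling q m (m+1) * Tm q n r (m+1) (K+1)) := by
            rw [← Finset.sum_range_succ'
              (fun j => qb q j * (qStirling q m j * Tm q n r j (K+1))),
              Finset.sum_range_succ]
          have g0 : qb q 0 * (qStirling q m 0 * Tm q n r 0 (K+1)) = 0 := by
            rw [show qb q 0 = 0 by unfold qb; norm_num]; ring
          have gm : qb q (m+1) * (qStirling q m (m+1) * Tm q n r (m+1) (K+1)) = 0 := by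
            rw [qStirling_of_lt q (Nat.lt_succ_self m)]; ring
          linarith [e1, g0, gm]
        rw [Finset.sum_range_succ' (fun j => qStirling q (m+1) j * Tm q n r j (K+1))]
        rw [show qStirling q (m+1) 0 * Tm q n r 0 (K+1) = 0 by
          rw [show qStirling q (m+1) 0 = 0 from rfl]; ring, add_zero]
        rw [Finset.sum_congr rfl (fun j _ => hsplit j), Finset.sum_add_distrib, hshift,
          ← Finset.sum_add_distrib]
        apply Finset.sum_congr rfl
        intro j _
        have hkey := key_lemma hq hq1 n r j K
        linear_combination qStirling q m j * hkey
      rw [hL, ih K, ih (K+1), Finset.sum_congr rfl (fun r _ => hR r),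
        Finset.mul_sum, Finset.mul_sum, ← Finset.sum_add_distrib]
      apply Finset.sum_congr rfl
      intro r _
      rw [Finset.mul_sum, Finset.mul_sum, ← Finset.sum_add_distrib]


/-- A convolution identity for `q`-Stirling numbers of the second kind:
`S_q[n+m,k] = Σ_r Σ_j S_q[m,j] q^{j(k-j)} binom(r,k-j)_{1/q} S_q[n,r] [j]_q [j-1]_q ⋯ [k-r+1]_q`. -/
theorem qStirling_convolution (q : ℝ) (hq : 0 < q) (hq1 : q ≠ 1) (n m k : ℕ) :
    qStirling q (n + m) k
    = ∑ r ∈ Finset.range (n + 1), ∑ j ∈ Finset.range (m + 1),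
        qStirling q m j * q ^ ((j : ℝ) * ((k : ℝ) - (j : ℝ))) *
          (if j ≤ k then qBinom (1 / q) r (k - j) else 0) *
          qStirling q n r *
          ∏ i ∈ Finset.range (r + j - k), qBracket q ((j : ℝ) - (i : ℝ)) := by
  rw [conv' q hq hq1 n m k]
  apply Finset.sum_congr rfl
  intro r _
  apply Finset.sum_congr rfl
  intro j _
  simp only [Tm]
  ring
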